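/- Fix n, k ≤ n, ℓ with ℓ/k ≥ k/n, and tolerance p_tol ∈ (0,1]. If C is a positive integer with C ≤ √(2 p_tol) · exp(k(ℓ/k − k/n)²), then C i.i.d. uniform k-subsets X_1,...,X_C of {1,...,n} satisfy pr(max_{1≤i<j≤C} |X_i ∩ X_j| ≥ ℓ) ≤ p_tol. -/

import Mathlib

open MeasureTheory ProbabilityTheory Set

section Aux
open Finset Real

lemma bern_mgf (p : ℝ) (hp0 : 0 ≤ p) (hp1 : p ≤ 1) :
    ∀ s, 0 ≤ s → 1 - p + p * Real.exp s ≤ Real.exp (p * s + s ^ 2 / 8) := by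
  set D : ℝ → ℝ := fun s => 1 - p + p * Real.exp s with hDdef
  have hD1 : ∀ s ∈ Ici (0:ℝ), 1 ≤ D s := by
    intro s hs
    have h1 : 1 ≤ Real.exp s := Real.one_le_exp hs
    have : p * 1 ≤ p * Real.exp s := by nlinarith
    simp only [hDdef]; nlinarith
  have hDpos : ∀ s ∈ Ici (0:ℝ), 0 < D s := fun s hs => lt_of_lt_of_le one_pos (hD1 s hs)
  have hDne : ∀ s ∈ Ici (0:ℝ), D s ≠ 0 := fun s hs => (hDpos s hs).ne'
  have hDderiv : ∀ s, HasDerivAt D (p * Real.exp s) s := by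
    intro s
    have : HasDerivAt (fun s : ℝ => Real.exp s) (Real.exp s) s := Real.hasDerivAt_exp s
    exact ((this.const_mul p).const_add (1 - p))
  set q : ℝ → ℝ := fun s => p * Real.exp s / D s with hqdef
  have hqderiv : ∀ s ∈ Ici (0:ℝ), HasDerivAt q
      ((p * Real.exp s * D s - p * Real.exp s * (p * Real.exp s)) / (D s)^2) s := by
    intro s hs
    exact ((Real.hasDerivAt_exp s).const_mul p).div (hDderiv s) (hDne s hs)
  have hqbound : ∀ s ∈ Ici (0:ℝ),
      (p * Real.exp s * D s - p * Real.exp s * (p * Real.exp s)) / (D s)^2 ≤ 1/4 := by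
    intro s hs
    have hD := hDpos s hs
    rw [div_le_iff₀ (by positivity)]
    generalize D s = v at *
    generalize p * Real.exp s = u at *
    nlinarith [sq_nonneg (v - 2 * u)]
  have hcont : ContinuousOn q (Ici 0) := by
    apply ContinuousOn.div
    · fun_prop
    · fun_prop
    · exact hDne
  have step1 : ∀ s ∈ Ici (0:ℝ), q s ≤ p + s / 4 := by
    have mono : MonotoneOn (fun s => p + s / 4 - q s) (Ici 0) := by
      apply monotoneOn_of_deriv_nonneg (convex_Ici 0)
      · exact (continuousOn_const.add (continuousOn_id.div_const 4)).sub hcont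
      · intro x hx
        rw [interior_Ici] at hx
        have h : HasDerivAt (fun s : ℝ => p + s / 4 - q s)
            (1/4 - (p * Real.exp x * D x - p * Real.exp x * (p * Real.exp x)) / (D x)^2) x := by
          exact (((hasDerivAt_id x).div_const 4).const_add p).sub (hqderiv x (Set.Ioi_subset_Ici_self hx))
        exact h.differentiableAt.differentiableWithinAt
      · intro x hx
        rw [interior_Ici] at hx
        have h : HasDerivAt (fun s : ℝ => p + s / 4 - q s)
            (1/4 - (p * Real.exp x * D x - p * Real.exp x * (p * Real.exp x)) / (D x)^2) x := by
          exact (((hasDerivAt_id x).div_const 4).const_add p).sub (hqderiv x (Set.Ioi_subset_Ici_self hx))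
        rw [h.deriv]
        have := hqbound x (Set.Ioi_subset_Ici_self hx)
        linarith
    intro s hs
    have h0 := mono self_mem_Ici hs hs
    have hq0 : q 0 = p := by
      simp only [hqdef, hDdef]
      rw [Real.exp_zero]
      field_simp
      ring
    simp only [hq0, zero_div, add_zero] at h0
    linarith
  intro s hs
  set ψ : ℝ → ℝ := fun s => p * s + s^2/8 - Real.log (D s) with hψdef
  have hψderiv : ∀ x ∈ Ici (0:ℝ), HasDerivAt ψ (p + x/4 - q x) x := by
    intro x hx
    have hlog : HasDerivAt (fun s => Real.log (D s)) (p * Real.exp x / D x) x :=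
      (hDderiv x).log (hDne x hx)
    have h1 : HasDerivAt (fun s : ℝ => p * s + s^2/8) (p + x/4) x := by
      have := ((hasDerivAt_id x).const_mul p).add (((hasDerivAt_pow 2 x)).div_const 8)
      exact this.congr_deriv (by ring)
    exact h1.sub hlog
  have hψcont : ContinuousOn ψ (Ici 0) := by
    apply ContinuousOn.sub
    · fun_prop
    · exact (continuousOn_const.add ((continuous_exp.continuousOn).const_smul p)).log hDne
      |>.congr (fun x hx => rfl)
  have monoψ : MonotoneOn ψ (Ici 0) := by
    apply monotoneOn_of_deriv_nonneg (convex_Ici 0) hψcont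
    · intro x hx
      rw [interior_Ici] at hx
      exact (hψderiv x (Set.Ioi_subset_Ici_self hx)).differentiableAt.differentiableWithinAt
    · intro x hx
      rw [interior_Ici] at hx
      rw [(hψderiv x (Set.Ioi_subset_Ici_self hx)).deriv]
      have := step1 x (Set.Ioi_subset_Ici_self hx)
      linarith
  have h0 := monoψ self_mem_Ici hs hs
  have hψ0 : ψ 0 = 0 := by
    simp only [hψdef, hDdef]
    rw [Real.exp_zero]
    norm_num
  rw [hψ0] at h0
  have : Real.log (D s) ≤ p * s + s^2/8 := by
    simp only [hψdef] at h0; linarith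
  calc D s = Real.exp (Real.log (D s)) := (Real.exp_log (hDpos s hs)).symm
    _ ≤ Real.exp (p * s + s^2/8) := Real.exp_le_exp.2 this

lemma card_supersets {n k j : ℕ} (S : Finset (Fin n)) (hS : S.card = j) (hjk : j ≤ k) :
    ((Finset.univ.powersetCard k).filter (fun s => S ⊆ s)).card = (n - j).choose (k - j) := by
  have : ((Finset.univ.powersetCard k).filter (fun s => S ⊆ s)).card
      = ((Sᶜ).powersetCard (k - j)).card := by
    apply Finset.card_bij' (fun s _ => s \ S) (fun t _ => t ∪ S)
    · intro s hs
      simp only [mem_filter, mem_powersetCard] at hs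
      rw [Finset.mem_powersetCard]
      constructor
      · intro x hx; simp only [Finset.mem_compl]
        exact fun hxS => (Finset.mem_sdiff.1 hx).2 hxS
      · rw [Finset.card_sdiff_of_subset hs.2, hs.1.2, hS]
    · intro t ht
      rw [Finset.mem_powersetCard] at ht
      simp only [mem_filter, mem_powersetCard]
      have hd : Disjoint t S := by
        rw [Finset.disjoint_left]
        intro x hx hxS
        have := ht.1 hx
        simp only [Finset.mem_compl] at this
        exact this hxS
      refine ⟨⟨Finset.subset_univ _, ?_⟩, Finset.subset_union_right⟩
      rw [Finset.card_union_of_disjoint hd, ht.2, hS]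
      omega
    · intro s hs
      simp only [mem_filter, mem_powersetCard] at hs
      rw [Finset.sdiff_union_of_subset hs.2]
    · intro t ht
      rw [Finset.mem_powersetCard] at ht
      have hd : Disjoint t S := by
        rw [Finset.disjoint_left]
        intro x hx hxS
        have := ht.1 hx
        simp only [Finset.mem_compl] at this
        exact this hxS
      rw [Finset.union_sdiff_right, Finset.sdiff_eq_self_of_disjoint hd]
  rw [this, Finset.card_powersetCard, Finset.card_compl, hS, Fintype.card_fin]

lemma ratio_bound (n k : ℕ) (hk : k ≤ n) : ∀ j, j ≤ k →
    n ^ j * (n - j).choose (k - j) ≤ k ^ j * n.choose k := by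
  intro j
  induction j with
  | zero => simp
  | succ j ih =>
    intro hj
    have hjk : j ≤ k := Nat.le_of_succ_le hj
    have ihj := ih hjk
    have hid : (n - j) * (n - j - 1).choose (k - j - 1) = (k - j) * (n - j).choose (k - j) := by
      have := Nat.add_one_mul_choose_eq (n - j - 1) (k - j - 1)
      have hn : n - j - 1 + 1 = n - j := by omega
      have hk' : k - j - 1 + 1 = k - j := by omega
      rw [hn, hk'] at this
      rw [this, Nat.mul_comm]
    have hmul : n * (k - j) ≤ k * (n - j) := by
      have e1 : n * (k - j) + n * j = n * k := by rw [← Nat.mul_add]; congr 1; omega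
      have e2 : k * (n - j) + k * j = k * n := by rw [← Nat.mul_add]; congr 1; omega
      have e3 : k * j ≤ n * j := Nat.mul_le_mul_right j hk
      have e4 : n * k = k * n := Nat.mul_comm n k
      omega
    have hnj : 0 < n - j := by omega
    have key : (n - j) * (n ^ (j+1) * (n - j - 1).choose (k - j - 1))
        ≤ (n - j) * (k ^ (j+1) * n.choose k) := by
      calc (n - j) * (n ^ (j+1) * (n - j - 1).choose (k - j - 1))
          = n ^ j * (n * ((n - j) * (n - j - 1).choose (k - j - 1))) := by ring
        _ = n ^ j * (n * ((k - j) * (n - j).choose (k - j))) := by rw [hid]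
        _ = (n * (k - j)) * (n ^ j * (n - j).choose (k - j)) := by ring
        _ ≤ (k * (n - j)) * (k ^ j * n.choose k) := Nat.mul_le_mul hmul ihj
        _ = (n - j) * (k ^ (j+1) * n.choose k) := by ring
    exact Nat.le_of_mul_le_mul_left key hnj

lemma double_count (n k j : ℕ) (hjk : j ≤ k) :
    ∑ st ∈ ((Finset.univ.powersetCard k) ×ˢ (Finset.univ.powersetCard k) :
        Finset (Finset (Fin n) × Finset (Fin n))), ((st.1 ∩ st.2).card.choose j)
      = n.choose j * ((n - j).choose (k - j))^2 := by
  have hPC : ∀ (X : Finset (Fin n)), X.card.choose j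
      = ∑ S ∈ Finset.univ.powersetCard j, (if S ⊆ X then 1 else 0) := by
    intro X
    rw [← Finset.card_filter]
    have : (Finset.univ.powersetCard j).filter (fun S => S ⊆ X) = X.powersetCard j := by
      ext S
      simp only [Finset.mem_filter, Finset.mem_powersetCard, Finset.subset_univ, true_and]
      tauto
    rw [this, Finset.card_powersetCard]
  have hsplit : ∀ (S s t : Finset (Fin n)),
      (if S ⊆ s ∩ t then (1:ℕ) else 0) = (if S ⊆ s then 1 else 0) * (if S ⊆ t then 1 else 0) := by
    intro S s t
    by_cases h1 : S ⊆ s <;> by_cases h2 : S ⊆ t <;>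
      simp [Finset.subset_inter_iff, h1, h2]
  calc ∑ st ∈ ((Finset.univ.powersetCard k) ×ˢ (Finset.univ.powersetCard k) :
        Finset (Finset (Fin n) × Finset (Fin n))), ((st.1 ∩ st.2).card.choose j)
      = ∑ st ∈ ((Finset.univ.powersetCard k) ×ˢ (Finset.univ.powersetCard k) :
        Finset (Finset (Fin n) × Finset (Fin n))),
        ∑ S ∈ Finset.univ.powersetCard j, (if S ⊆ st.1 ∩ st.2 then 1 else 0) := by
        exact Finset.sum_congr rfl (fun st _ => hPC _)
    _ = ∑ S ∈ Finset.univ.powersetCard j,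
        ∑ st ∈ ((Finset.univ.powersetCard k) ×ˢ (Finset.univ.powersetCard k) :
        Finset (Finset (Fin n) × Finset (Fin n))), (if S ⊆ st.1 ∩ st.2 then 1 else 0) :=
        Finset.sum_comm
    _ = ∑ S ∈ Finset.univ.powersetCard j,
        ((∑ s ∈ Finset.univ.powersetCard k, if S ⊆ s then 1 else 0) *
         (∑ t ∈ Finset.univ.powersetCard k, if S ⊆ t then 1 else 0)) := by
        refine Finset.sum_congr rfl (fun S _ => ?_)
        rw [Finset.sum_mul_sum, Finset.sum_product]
        exact Finset.sum_congr rfl (fun s _ => Finset.sum_congr rfl (fun t _ => hsplit S s t))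
    _ = ∑ S ∈ Finset.univ.powersetCard j, ((n - j).choose (k - j))^2 := by
        refine Finset.sum_congr rfl (fun S hS => ?_)
        rw [Finset.mem_powersetCard] at hS
        rw [← Finset.card_filter, card_supersets S hS.2 hjk, sq]
    _ = n.choose j * ((n - j).choose (k - j))^2 := by
        rw [Finset.sum_const, Finset.card_powersetCard, Finset.card_univ, Fintype.card_fin,
          smul_eq_mul]

lemma count_bound (n k ℓ : ℕ) (hk0 : 0 < k) (hk : k ≤ n) (hℓ : ℓ ≤ k)
    (hratio : (k : ℝ) / n ≤ (ℓ : ℝ) / k) :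
    (((((Finset.univ.powersetCard k) ×ˢ (Finset.univ.powersetCard k) :
        Finset (Finset (Fin n) × Finset (Fin n))).filter
        (fun st => ℓ ≤ (st.1 ∩ st.2).card)).card : ℝ))
      ≤ (n.choose k : ℝ)^2 * Real.exp (-2 * k * ((ℓ : ℝ)/k - (k : ℝ)/n)^2) := by
  have hn0 : 0 < n := lt_of_lt_of_le hk0 hk
  set P := ((Finset.univ.powersetCard k) ×ˢ (Finset.univ.powersetCard k) :
        Finset (Finset (Fin n) × Finset (Fin n))) with hPdef
  set d : ℝ := (ℓ : ℝ)/k - (k : ℝ)/n with hddef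
  have hd0 : 0 ≤ d := by simp only [hddef]; linarith
  set s : ℝ := 4 * d with hsdef
  have hs0 : 0 ≤ s := by positivity
  set τ : ℝ := Real.exp s with hτdef
  have hτ1 : 1 ≤ τ := Real.one_le_exp hs0
  have hτ0 : 0 < τ := Real.exp_pos s
  set p : ℝ := (k : ℝ)/n with hpdef
  have hp0 : 0 ≤ p := by positivity
  have hp1 : p ≤ 1 := by
    rw [hpdef, div_le_one (by exact_mod_cast hn0)]
    exact_mod_cast hk
  set N : ℝ := (n.choose k : ℝ) with hNdef
  have hN0 : 0 < N := by
    rw [hNdef]; exact_mod_cast Nat.choose_pos hk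
  -- step 1: card bound by generating sum
  have step1 : ((P.filter (fun st => ℓ ≤ (st.1 ∩ st.2).card)).card : ℝ) * τ^ℓ
      ≤ ∑ st ∈ P, τ^((st.1 ∩ st.2).card) := by
    calc ((P.filter (fun st => ℓ ≤ (st.1 ∩ st.2).card)).card : ℝ) * τ^ℓ
        = ∑ _st ∈ P.filter (fun st => ℓ ≤ (st.1 ∩ st.2).card), τ^ℓ := by
          rw [Finset.sum_const, nsmul_eq_mul]
      _ ≤ ∑ st ∈ P.filter (fun st => ℓ ≤ (st.1 ∩ st.2).card), τ^((st.1 ∩ st.2).card) := by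
          apply Finset.sum_le_sum
          intro st hst
          rw [Finset.mem_filter] at hst
          exact pow_le_pow_right₀ hτ1 hst.2
      _ ≤ ∑ st ∈ P, τ^((st.1 ∩ st.2).card) := by
          apply Finset.sum_le_sum_of_subset_of_nonneg (Finset.filter_subset _ _)
          intro st _ _
          positivity
  -- step 2: generating sum identity and bound
  have hcardle : ∀ st ∈ P, (st.1 ∩ st.2).card ≤ k := by
    intro st hst
    rw [hPdef, Finset.mem_product, Finset.mem_powersetCard, Finset.mem_powersetCard] at hst
    calc (st.1 ∩ st.2).card ≤ st.1.card := Finset.card_le_card Finset.inter_subset_left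
      _ = k := hst.1.2
  have step2 : ∑ st ∈ P, τ^((st.1 ∩ st.2).card)
      = ∑ j ∈ Finset.range (k+1), (τ-1)^j *
          ((n.choose j : ℝ) * ((n - j).choose (k - j) : ℝ)^2) := by
    have hexp : ∀ st ∈ P, τ^((st.1 ∩ st.2).card)
        = ∑ j ∈ Finset.range (k+1), (τ-1)^j * (((st.1 ∩ st.2).card.choose j : ℕ) : ℝ) := by
      intro st hst
      set m := (st.1 ∩ st.2).card with hmdef
      have hmk : m ≤ k := hcardle st hst
      have : τ ^ m = ((τ - 1) + 1)^m := by norm_num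
      rw [this, add_pow]
      simp only [one_pow, mul_one]
      -- extend range
      apply Finset.sum_subset
      · intro j hj
        rw [Finset.mem_range] at *
        omega
      · intro j _ hj
        rw [Finset.mem_range, not_lt] at hj
        have : m.choose j = 0 := Nat.choose_eq_zero_of_lt (by omega)
        rw [this]
        norm_num
    rw [Finset.sum_congr rfl hexp, Finset.sum_comm]
    refine Finset.sum_congr rfl (fun j hj => ?_)
    rw [Finset.mem_range] at hj
    rw [← Finset.mul_sum, ← Nat.cast_sum]
    rw [double_count n k j (by omega)]
    push_cast
    ring
  -- step 3: bound each term
  have step3 : ∑ j ∈ Finset.range (k+1), (τ-1)^j *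
          ((n.choose j : ℝ) * ((n - j).choose (k - j) : ℝ)^2)
      ≤ N^2 * (1 + (τ-1)*p)^k := by
    have hterm : ∀ j ∈ Finset.range (k+1), (τ-1)^j *
          ((n.choose j : ℝ) * ((n - j).choose (k - j) : ℝ)^2)
        ≤ N^2 * ((k.choose j : ℝ) * ((τ-1)*p)^j) := by
      intro j hj
      rw [Finset.mem_range] at hj
      have hjk : j ≤ k := by omega
      -- identity
      have hid : (n.choose j : ℝ) * ((n - j).choose (k - j) : ℝ)
          = N * (k.choose j : ℝ) := by
        rw [hNdef]
        exact_mod_cast congrArg (Nat.cast (R := ℝ)) (Nat.choose_mul (n := n) hjk).symm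
      -- ratio bound
      have hrb : ((n - j).choose (k - j) : ℝ) ≤ p^j * N := by
        have := ratio_bound n k hk j hjk
        have hcast : (n:ℝ)^j * ((n - j).choose (k - j) : ℝ) ≤ (k:ℝ)^j * N := by
          rw [hNdef]; exact_mod_cast this
        have hnj : (0:ℝ) < (n:ℝ)^j := by positivity
        rw [hpdef, div_pow, div_mul_eq_mul_div, le_div_iff₀ hnj]
        calc ((n - j).choose (k - j) : ℝ) * (n:ℝ)^j
            = (n:ℝ)^j * ((n - j).choose (k - j) : ℝ) := by ring
          _ ≤ (k:ℝ)^j * N := hcast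
      have hτ1' : 0 ≤ (τ-1) := by linarith
      calc (τ-1)^j * ((n.choose j : ℝ) * ((n - j).choose (k - j) : ℝ)^2)
          = (τ-1)^j * (((n.choose j : ℝ) * ((n - j).choose (k - j) : ℝ)) *
              ((n - j).choose (k - j) : ℝ)) := by ring
        _ = (τ-1)^j * ((N * (k.choose j : ℝ)) * ((n - j).choose (k - j) : ℝ)) := by rw [hid]
        _ ≤ (τ-1)^j * ((N * (k.choose j : ℝ)) * (p^j * N)) := by
            apply mul_le_mul_of_nonneg_left _ (by positivity)
            apply mul_le_mul_of_nonneg_left hrb (by positivity)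
        _ = N^2 * ((k.choose j : ℝ) * ((τ-1)*p)^j) := by rw [mul_pow]; ring
    calc ∑ j ∈ Finset.range (k+1), (τ-1)^j *
          ((n.choose j : ℝ) * ((n - j).choose (k - j) : ℝ)^2)
        ≤ ∑ j ∈ Finset.range (k+1), N^2 * ((k.choose j : ℝ) * ((τ-1)*p)^j) :=
          Finset.sum_le_sum hterm
      _ = N^2 * (1 + (τ-1)*p)^k := by
          rw [← Finset.mul_sum]
          congr 1
          rw [add_comm (1:ℝ), add_pow]
          refine Finset.sum_congr rfl (fun j hj => ?_)
          simp only [one_pow, mul_one]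
          ring
  -- combine
  have hτℓ : (0:ℝ) < τ^ℓ := by positivity
  have main : ((P.filter (fun st => ℓ ≤ (st.1 ∩ st.2).card)).card : ℝ)
      ≤ N^2 * (1 + (τ-1)*p)^k / τ^ℓ := by
    rw [le_div_iff₀ hτℓ]
    calc _ ≤ ∑ st ∈ P, τ^((st.1 ∩ st.2).card) := step1
      _ = _ := step2
      _ ≤ _ := step3
  refine main.trans ?_
  -- final analytic bound
  have hbern : 1 + (τ-1)*p ≤ Real.exp (p * s + s^2/8) := by
    have := bern_mgf p hp0 hp1 s hs0
    calc 1 + (τ-1)*p = 1 - p + p * Real.exp s := by rw [hτdef]; ring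
      _ ≤ _ := this
  have h1p : (0:ℝ) ≤ 1 + (τ-1)*p := by nlinarith
  have hpow : (1 + (τ-1)*p)^k ≤ Real.exp (k * (p * s + s^2/8)) := by
    calc (1 + (τ-1)*p)^k ≤ (Real.exp (p * s + s^2/8))^k := pow_le_pow_left₀ h1p hbern k
      _ = Real.exp (k * (p * s + s^2/8)) := (Real.exp_nat_mul _ k).symm
  have hτℓexp : τ^ℓ = Real.exp (ℓ * s) := by
    rw [Real.exp_nat_mul]
  have hkne : (k:ℝ) ≠ 0 := Nat.cast_ne_zero.2 hk0.ne'
  have hl : (ℓ:ℝ) = (d + p) * k := by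
    rw [hddef]; field_simp; ring
  have hexpeq : (k:ℝ) * (p * s + s^2/8) - (ℓ:ℝ) * s = -2*k*d^2 := by
    rw [hl, hsdef]; ring
  calc N^2 * (1 + (τ-1)*p)^k / τ^ℓ
      ≤ N^2 * Real.exp (k * (p * s + s^2/8)) / τ^ℓ := by
        exact (div_le_div_iff_of_pos_right hτℓ).2 (mul_le_mul_of_nonneg_left hpow (by positivity))
    _ = N^2 * (Real.exp (k * (p * s + s^2/8)) / Real.exp (ℓ * s)) := by
        rw [hτℓexp]; ring
    _ = N^2 * Real.exp ((k:ℝ) * (p * s + s^2/8) - (ℓ:ℝ) * s) := by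
        rw [Real.exp_sub]
    _ = N^2 * Real.exp (-2*k*d^2) := by rw [hexpeq]

lemma two_mul_pairs_card_le (C : ℕ) :
    2 * ((Finset.univ : Finset (Fin C × Fin C)).filter (fun p => p.1 < p.2)).card ≤ C * C := by
  classical
  set A := (Finset.univ : Finset (Fin C × Fin C)).filter (fun p => p.1 < p.2) with hA
  set B := (Finset.univ : Finset (Fin C × Fin C)).filter (fun p => p.2 < p.1) with hB
  have hAB : A.card = B.card := by
    apply Finset.card_bij' (fun p _ => p.swap) (fun p _ => p.swap)
    · intro p _; rfl
    · intro p _; rfl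
    · intro p hp
      simp only [hA, hB, Finset.mem_filter, Finset.mem_univ, true_and] at *
      exact hp
    · intro p hp
      simp only [hA, hB, Finset.mem_filter, Finset.mem_univ, true_and] at *
      exact hp
  have hdisj : Disjoint A B := by
    rw [Finset.disjoint_left]
    intro p hpA hpB
    simp only [hA, hB, Finset.mem_filter, Finset.mem_univ, true_and] at hpA hpB
    exact absurd (hpA.trans hpB) (lt_irrefl _)
  have : A.card + B.card = (A ∪ B).card := (Finset.card_union_of_disjoint hdisj).symm
  have hle : (A ∪ B).card ≤ Fintype.card (Fin C × Fin C) := Finset.card_le_univ _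
  rw [Fintype.card_prod, Fintype.card_fin] at hle
  omega

end Aux

/-- Capacity bound: if `C ≤ √(2 p_tol) · exp(k (ℓ/k − k/n)²)`, then `C` i.i.d. uniform
`k`-subsets of `{1,…,n}` have probability at most `p_tol` of some pairwise
intersection of size at least `ℓ`. -/
theorem stmt11 {Ω : Type*} [MeasureSpace Ω] [IsProbabilityMeasure (ℙ : Measure Ω)]
    (n k ℓ C : ℕ) (hk0 : 0 < k) (hk : k ≤ n) (hℓ : ℓ ≤ k)
    (hratio : (k : ℝ) / n ≤ (ℓ : ℝ) / k)
    (ptol : ℝ) (hp0 : 0 < ptol) (hp1 : ptol ≤ 1) (hC0 : 1 ≤ C)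
    (hC : (C : ℝ) ≤ Real.sqrt (2 * ptol) * Real.exp (k * ((ℓ : ℝ) / k - (k : ℝ) / n) ^ 2))
    (X : Fin C → Ω → Finset (Fin n))
    (hcard : ∀ i ω, (X i ω).card = k)
    (hunif : ∀ i (s : Finset (Fin n)), s.card = k →
      ℙ {ω | X i ω = s} = ((n.choose k : ENNReal))⁻¹)
    (hindep : ∀ (I : Finset (Fin C)) (s : Fin C → Finset (Fin n)),
      ℙ (⋂ i ∈ I, {ω | X i ω = s i}) = ∏ i ∈ I, ℙ {ω | X i ω = s i}) :
    (ℙ {ω | ∃ i j : Fin C, i < j ∧ ℓ ≤ ((X i ω) ∩ (X j ω)).card}).toReal ≤ ptol := by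
  classical
  have hn0 : 0 < n := lt_of_lt_of_le hk0 hk
  have hN0 : 0 < n.choose k := Nat.choose_pos hk
  set bad := (((Finset.univ.powersetCard k) ×ˢ (Finset.univ.powersetCard k) :
        Finset (Finset (Fin n) × Finset (Fin n))).filter
        (fun st => ℓ ≤ (st.1 ∩ st.2).card)) with hbaddef
  set pairs := ((Finset.univ : Finset (Fin C × Fin C)).filter (fun p => p.1 < p.2)) with hpairsdef
  -- per-pair probability bound
  have pairbound : ∀ i j : Fin C, i ≠ j →
      ℙ {ω | ℓ ≤ (X i ω ∩ X j ω).card}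
        ≤ (bad.card : ENNReal) * (((n.choose k : ENNReal))⁻¹ * ((n.choose k : ENNReal))⁻¹) := by
    intro i j hij
    have hsub : {ω | ℓ ≤ (X i ω ∩ X j ω).card} ⊆
        ⋃ st ∈ bad, ({ω | X i ω = st.1} ∩ {ω | X j ω = st.2}) := by
      intro ω hω
      refine Set.mem_iUnion₂.2 ⟨((X i ω, X j ω) : Finset (Fin n) × Finset (Fin n)), ?_, rfl, rfl⟩
      simp only [hbaddef, Finset.mem_filter, Finset.mem_product, Finset.mem_powersetCard]
      exact ⟨⟨⟨Finset.subset_univ _, hcard i ω⟩, ⟨Finset.subset_univ _, hcard j ω⟩⟩, hω⟩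
    calc ℙ {ω | ℓ ≤ (X i ω ∩ X j ω).card}
        ≤ ℙ (⋃ st ∈ bad, ({ω | X i ω = st.1} ∩ {ω | X j ω = st.2})) := measure_mono hsub
      _ ≤ ∑ st ∈ bad, ℙ ({ω | X i ω = st.1} ∩ {ω | X j ω = st.2}) :=
          measure_biUnion_finset_le _ _
      _ = ∑ _st ∈ bad, ((n.choose k : ENNReal))⁻¹ * ((n.choose k : ENNReal))⁻¹ := by
          refine Finset.sum_congr rfl (fun st hst => ?_)
          simp only [hbaddef, Finset.mem_filter, Finset.mem_product,
            Finset.mem_powersetCard] at hst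
          obtain ⟨⟨⟨-, hc1⟩, ⟨-, hc2⟩⟩, -⟩ := hst
          have key := hindep {i, j} (fun m => if m = i then st.1 else st.2)
          have hIset : (⋂ m ∈ ({i, j} : Finset (Fin C)),
              {ω | X m ω = (if m = i then st.1 else st.2)})
              = {ω | X i ω = st.1} ∩ {ω | X j ω = st.2} := by
            rw [Finset.set_biInter_insert, Finset.set_biInter_singleton]
            congr 1
            · simp
            · simp [if_neg hij.symm]
          have hprod : (∏ m ∈ ({i, j} : Finset (Fin C)),
              ℙ {ω | X m ω = (if m = i then st.1 else st.2)})
              = ℙ {ω | X i ω = st.1} * ℙ {ω | X j ω = st.2} := by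
            rw [Finset.prod_insert (by simp [hij]), Finset.prod_singleton]
            congr 2
            · simp
            · simp [if_neg hij.symm]
          rw [← hIset, key, hprod, hunif i st.1 hc1, hunif j st.2 hc2]
      _ = (bad.card : ENNReal) * (((n.choose k : ENNReal))⁻¹ * ((n.choose k : ENNReal))⁻¹) := by
          rw [Finset.sum_const, nsmul_eq_mul]
  -- global union bound
  have hEsub : {ω | ∃ i j : Fin C, i < j ∧ ℓ ≤ ((X i ω) ∩ (X j ω)).card} ⊆
      ⋃ p ∈ pairs, {ω | ℓ ≤ (X p.1 ω ∩ X p.2 ω).card} := by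
    rintro ω ⟨i, j, hij, hc⟩
    refine Set.mem_iUnion₂.2 ⟨((i, j) : Fin C × Fin C), ?_, hc⟩
    rw [hpairsdef]
    simp only [Finset.mem_filter, Finset.mem_univ, true_and]
    exact hij
  have hglobal : ℙ {ω | ∃ i j : Fin C, i < j ∧ ℓ ≤ ((X i ω) ∩ (X j ω)).card}
      ≤ (pairs.card : ENNReal) * ((bad.card : ENNReal) *
        (((n.choose k : ENNReal))⁻¹ * ((n.choose k : ENNReal))⁻¹)) := by
    calc ℙ {ω | ∃ i j : Fin C, i < j ∧ ℓ ≤ ((X i ω) ∩ (X j ω)).card}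
        ≤ ℙ (⋃ p ∈ pairs, {ω | ℓ ≤ (X p.1 ω ∩ X p.2 ω).card}) := measure_mono hEsub
      _ ≤ ∑ p ∈ pairs, ℙ {ω | ℓ ≤ (X p.1 ω ∩ X p.2 ω).card} := measure_biUnion_finset_le _ _
      _ ≤ ∑ _p ∈ pairs, (bad.card : ENNReal) *
            (((n.choose k : ENNReal))⁻¹ * ((n.choose k : ENNReal))⁻¹) := by
          refine Finset.sum_le_sum (fun p hp => ?_)
          simp only [hpairsdef, Finset.mem_filter, Finset.mem_univ, true_and] at hp
          exact pairbound p.1 p.2 (ne_of_lt hp)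
      _ = (pairs.card : ENNReal) * ((bad.card : ENNReal) *
            (((n.choose k : ENNReal))⁻¹ * ((n.choose k : ENNReal))⁻¹)) := by
          rw [Finset.sum_const, nsmul_eq_mul]
  -- pass to reals
  have hNne : ((n.choose k : ENNReal)) ≠ 0 := by exact_mod_cast hN0.ne'
  have hRHSne : (pairs.card : ENNReal) * ((bad.card : ENNReal) *
        (((n.choose k : ENNReal))⁻¹ * ((n.choose k : ENNReal))⁻¹)) ≠ ⊤ := by
    apply ENNReal.mul_ne_top (ENNReal.natCast_ne_top _)
    apply ENNReal.mul_ne_top (ENNReal.natCast_ne_top _)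
    exact ENNReal.mul_ne_top (ENNReal.inv_ne_top.2 hNne) (ENNReal.inv_ne_top.2 hNne)
  have hreal := ENNReal.toReal_mono hRHSne hglobal
  rw [ENNReal.toReal_mul, ENNReal.toReal_mul, ENNReal.toReal_mul, ENNReal.toReal_inv,
    ENNReal.toReal_natCast, ENNReal.toReal_natCast, ENNReal.toReal_natCast] at hreal
  refine hreal.trans ?_
  -- real arithmetic
  set d : ℝ := (ℓ : ℝ)/k - (k : ℝ)/n with hddef
  have hbadR : ((bad.card : ℕ) : ℝ) ≤ (n.choose k : ℝ)^2 * Real.exp (-2 * k * d^2) := by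
    rw [hbaddef]
    exact count_bound n k ℓ hk0 hk hℓ hratio
  have hpairsR : ((pairs.card : ℕ) : ℝ) ≤ (C : ℝ) * (C : ℝ) / 2 := by
    have h := two_mul_pairs_card_le C
    rw [hpairsdef]
    have : ((2 * pairs.card : ℕ) : ℝ) ≤ ((C * C : ℕ) : ℝ) := by exact_mod_cast h
    push_cast at this ⊢
    linarith
  have hNR : (0:ℝ) < (n.choose k : ℝ) := by exact_mod_cast hN0
  have hEneg : (0:ℝ) < Real.exp (-2 * k * d^2) := Real.exp_pos _
  have hsq : (C : ℝ) * (C : ℝ) ≤ 2 * ptol * (Real.exp ((k:ℝ) * d^2))^2 := by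
    have h2p : (0:ℝ) ≤ 2 * ptol := by positivity
    have hss := Real.sq_sqrt h2p
    have hCnn : (0:ℝ) ≤ (C : ℝ) := Nat.cast_nonneg C
    nlinarith [hC, Real.sqrt_nonneg (2 * ptol), Real.exp_pos ((k:ℝ) * d^2)]
  have hprod1 : (Real.exp ((k:ℝ) * d^2))^2 * Real.exp (-2 * k * d^2) = 1 := by
    rw [sq, ← Real.exp_add, ← Real.exp_add,
      show (k:ℝ) * d^2 + (k:ℝ) * d^2 + (-2 * k * d^2) = 0 by ring, Real.exp_zero]
  calc ((pairs.card : ℕ) : ℝ) * (((bad.card : ℕ) : ℝ) *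
        (((n.choose k : ℝ))⁻¹ * ((n.choose k : ℝ))⁻¹))
      ≤ ((pairs.card : ℕ) : ℝ) * (((n.choose k : ℝ)^2 * Real.exp (-2 * k * d^2)) *
        (((n.choose k : ℝ))⁻¹ * ((n.choose k : ℝ))⁻¹)) := by
        apply mul_le_mul_of_nonneg_left _ (Nat.cast_nonneg _)
        apply mul_le_mul_of_nonneg_right hbadR (by positivity)
    _ = ((pairs.card : ℕ) : ℝ) * Real.exp (-2 * k * d^2) := by
        field_simp
    _ ≤ ((C : ℝ) * (C : ℝ) / 2) * Real.exp (-2 * k * d^2) :=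
        mul_le_mul_of_nonneg_right hpairsR hEneg.le
    _ ≤ ptol := by nlinarith [hsq, hprod1, hEneg, hp0.le]
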